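/- Let t ≥ 1, 0 < h < t and z ∈ ℂ with 0 < Re(z) < 1. Define Δ(t,h,z) = ((t+3h)^z − 3(t+2h)^z + 3(t+h)^z − t^z)/h³ · 1/((z+1)(z+2)(z+3)). Then |Δ(t,h,z)| ≤ 4 t^{Re(z)}. -/

import Mathlib

open intervalIntegral Set
open scoped Interval


/-- The finite-difference estimate for
`Δ(t,h,z) = ((t+3h)^z − 3(t+2h)^z + 3(t+h)^z − t^z)/h³ · 1/((z+1)(z+2)(z+3))`:
for `t ≥ 1`, `0 < h < t` and `0 < Re z < 1`, one has `|Δ(t,h,z)| ≤ 4 t^{Re z}`. -/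
theorem finite_difference_bound
    (t h : ℝ) (ht : 1 ≤ t) (hh : 0 < h) (hht : h < t)
    (z : ℂ) (hz0 : 0 < z.re) (hz1 : z.re < 1) :
    ‖(((t + 3*h : ℝ) : ℂ) ^ z - 3 * ((t + 2*h : ℝ) : ℂ) ^ z +
          3 * ((t + h : ℝ) : ℂ) ^ z - ((t : ℝ) : ℂ) ^ z) / (h : ℂ) ^ 3 *
        (1 / ((z + 1) * (z + 2) * (z + 3)))‖ ≤ 4 * t ^ z.re := by
  have hz : z ≠ 0 := fun e => by simp [e] at hz0
  have hz1' : z - 1 ≠ 0 := fun e => by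
    have := congrArg Complex.re e; simp at this; linarith
  have hz2' : z - 2 ≠ 0 := fun e => by
    have := congrArg Complex.re e; simp at this; linarith
  have hz3ne : z - 3 ≠ -1 := fun e => by
    have := congrArg Complex.re e; simp at this; linarith
  have hz2ne : z - 2 ≠ -1 := fun e => by
    have := congrArg Complex.re e; simp at this; linarith
  have hz1ne : z - 1 ≠ -1 := fun e => by
    have := congrArg Complex.re e; simp at this; linarith
  have hmem : ∀ a : ℝ, t ≤ a → (0:ℝ) ∉ [[a, a+h]] := by
    intro a ha hc
    rw [Set.mem_uIcc] at hc
    rcases hc with ⟨h1,_⟩|⟨h1,_⟩ <;> linarith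
  -- definitions
  set B : ℝ → ℂ := fun x => (((x+h : ℝ) : ℂ)^(z-2) - ((x:ℝ):ℂ)^(z-2))/(z-2) with hB
  set C : ℝ → ℂ := fun x => (((x+h : ℝ) : ℂ)^(z-1) - ((x:ℝ):ℂ)^(z-1))/((z-1)*(z-2)) with hC
  set D : ℝ → ℂ := fun x => (((x+h : ℝ) : ℂ)^z - ((x:ℝ):ℂ)^z)/(z*(z-1)*(z-2)) with hD
  -- step 1 : B a = ∫ x in a..a+h, x^(z-3)
  have step1 : ∀ a : ℝ, t ≤ a → B a = ∫ x in a..a+h, ((x:ℝ):ℂ)^(z-3) := by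
    intro a ha
    rw [integral_cpow (Or.inr ⟨hz3ne, hmem a ha⟩)]
    have e : z - 3 + 1 = z - 2 := by ring
    rw [e]
  -- step 2 : C (a+h) - C a = ∫ x in a..a+h, B x
  have step2 : ∀ a : ℝ, t ≤ a → C (a+h) - C a = ∫ x in a..a+h, B x := by
    intro a ha
    have hmem2 : (0:ℝ) ∉ [[a+h, a+h+h]] := hmem (a+h) (by linarith)
    have i1 : IntervalIntegrable (fun x : ℝ => ((x:ℝ):ℂ)^(z-2)) MeasureTheory.volume a (a+h) :=
      intervalIntegrable_cpow (Or.inr (hmem a ha))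
    have i2 : IntervalIntegrable (fun x : ℝ => (((x+h:ℝ)):ℂ)^(z-2)) MeasureTheory.volume a (a+h) := by
      have := (intervalIntegrable_cpow (a := a+h) (b := a+h+h) (r := z-2)
        (Or.inr hmem2)).comp_add_right h
      simpa using this
    have : (∫ x in a..a+h, B x)
        = ((∫ x in a..a+h, (((x+h:ℝ)):ℂ)^(z-2)) - ∫ x in a..a+h, ((x:ℝ):ℂ)^(z-2))/(z-2) := by
      simp only [hB]
      rw [intervalIntegral.integral_div, intervalIntegral.integral_sub i2 i1]
    rw [this, intervalIntegral.integral_comp_add_right (fun y : ℝ => ((y:ℝ):ℂ)^(z-2)) h,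
      integral_cpow (Or.inr ⟨hz2ne, hmem a ha⟩),
      integral_cpow (Or.inr ⟨hz2ne, hmem (a+h) (by linarith)⟩)]
    have e1 : z - 2 + 1 = z - 1 := by ring
    rw [e1]
    simp only [hC]
    push_cast
    field_simp [hz1', hz2']
    try ring
  -- step 3 : D (a+h) - D a = ∫ x in a..a+h, C x
  have step3 : ∀ a : ℝ, t ≤ a → D (a+h) - D a = ∫ x in a..a+h, C x := by
    intro a ha
    have hmem2 : (0:ℝ) ∉ [[a+h, a+h+h]] := hmem (a+h) (by linarith)
    have i1 : IntervalIntegrable (fun x : ℝ => ((x:ℝ):ℂ)^(z-1)) MeasureTheory.volume a (a+h) :=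
      intervalIntegrable_cpow (Or.inr (hmem a ha))
    have i2 : IntervalIntegrable (fun x : ℝ => (((x+h:ℝ)):ℂ)^(z-1)) MeasureTheory.volume a (a+h) := by
      have := (intervalIntegrable_cpow (a := a+h) (b := a+h+h) (r := z-1)
        (Or.inr hmem2)).comp_add_right h
      simpa using this
    have : (∫ x in a..a+h, C x)
        = ((∫ x in a..a+h, (((x+h:ℝ)):ℂ)^(z-1)) - ∫ x in a..a+h, ((x:ℝ):ℂ)^(z-1))/((z-1)*(z-2)) := by
      simp only [hC]
      rw [intervalIntegral.integral_div, intervalIntegral.integral_sub i2 i1]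
    rw [this, intervalIntegral.integral_comp_add_right (fun y : ℝ => ((y:ℝ):ℂ)^(z-1)) h,
      integral_cpow (Or.inr ⟨hz1ne, hmem a ha⟩),
      integral_cpow (Or.inr ⟨hz1ne, hmem (a+h) (by linarith)⟩)]
    have e1 : z - 1 + 1 = z := by ring
    rw [e1]
    simp only [hD]
    push_cast
    rw [div_sub_div_same, div_sub_div_same, div_div, mul_assoc]
  -- bound on B
  have ht0 : (0:ℝ) < t := by linarith
  have bB : ∀ a : ℝ, t ≤ a → ‖B a‖ ≤ t^(z.re-3) * h := by
    intro a ha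
    rw [step1 a ha]
    have := intervalIntegral.norm_integral_le_of_norm_le_const
      (a := a) (b := a+h) (C := t^(z.re-3)) (f := fun x : ℝ => ((x:ℝ):ℂ)^(z-3)) ?_
    · calc ‖∫ x in a..a+h, ((x:ℝ):ℂ)^(z-3)‖ ≤ t^(z.re-3) * |a+h-a| := this
        _ = t^(z.re-3) * h := by rw [show a+h-a = h by ring, abs_of_pos hh]
    · intro x hx
      rw [Set.uIoc_of_le (by linarith), Set.mem_Ioc] at hx
      have hxt : t ≤ x := le_trans ha hx.1.le
      have hx0 : (0:ℝ) < x := lt_of_lt_of_le ht0 hxt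
      rw [Complex.norm_cpow_eq_rpow_re_of_pos hx0]
      have : (z-3).re = z.re - 3 := by simp
      rw [this]
      exact Real.rpow_le_rpow_of_nonpos ht0 hxt (by linarith)
  -- bound on ΔC
  have bDC : ∀ a : ℝ, t ≤ a → ‖C (a+h) - C a‖ ≤ t^(z.re-3) * h * h := by
    intro a ha
    rw [step2 a ha]
    have := intervalIntegral.norm_integral_le_of_norm_le_const
      (a := a) (b := a+h) (C := t^(z.re-3) * h) (f := B) ?_
    · calc ‖∫ x in a..a+h, B x‖ ≤ t^(z.re-3) * h * |a+h-a| := this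
        _ = t^(z.re-3) * h * h := by rw [show a+h-a = h by ring, abs_of_pos hh]
    · intro x hx
      rw [Set.uIoc_of_le (by linarith), Set.mem_Ioc] at hx
      exact bB x (le_trans ha hx.1.le)
  -- integrability of C and of C ∘ (· + h) on [t, t+h]
  have iC1 : IntervalIntegrable C MeasureTheory.volume t (t+h) := by
    have j2 : IntervalIntegrable (fun x : ℝ => ((x+h :ℝ):ℂ)^(z-1)) MeasureTheory.volume t (t+h) := by
      have h1 := (intervalIntegrable_cpow (a := t+h) (b := t+h+h) (r := z-1)
        (Or.inr (hmem (t+h) (by linarith)))).comp_add_right h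
      have e2 : t+h-h = t := by ring
      have e3 : t+h+h-h = t+h := by ring
      rwa [e2, e3] at h1
    exact (j2.sub (intervalIntegrable_cpow (Or.inr (hmem t le_rfl)))).div_const _
  have iC2 : IntervalIntegrable (fun x => C (x+h)) MeasureTheory.volume t (t+h) := by
    have j1 : IntervalIntegrable (fun x : ℝ => (((x+h)+h :ℝ):ℂ)^(z-1)) MeasureTheory.volume t (t+h) := by
      have h1 := (intervalIntegrable_cpow (a := t+(h+h)) (b := t+(h+h)+h) (r := z-1)
        (Or.inr (hmem (t+(h+h)) (by linarith)))).comp_add_right (h+h)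
      have e : ∀ x:ℝ, (((x+h)+h:ℝ):ℂ) = ((x+(h+h):ℝ):ℂ) := by intro x; norm_cast; ring
      simp only [e]
      have e2 : t+(h+h)-(h+h) = t := by ring
      have e3 : t+(h+h)+h-(h+h) = t+h := by ring
      rwa [e2, e3] at h1
    have j2 : IntervalIntegrable (fun x : ℝ => ((x+h :ℝ):ℂ)^(z-1)) MeasureTheory.volume t (t+h) := by
      have h1 := (intervalIntegrable_cpow (a := t+h) (b := t+h+h) (r := z-1)
        (Or.inr (hmem (t+h) (by linarith)))).comp_add_right h
      have e2 : t+h-h = t := by ring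
      have e3 : t+h+h-h = t+h := by ring
      rwa [e2, e3] at h1
    exact (j1.sub j2).div_const _
  -- key identity for the second difference of D
  have keyD : (D (t+h+h) - D (t+h)) - (D (t+h) - D t) = ∫ x in t..t+h, (C (x+h) - C x) := by
    rw [intervalIntegral.integral_sub iC2 iC1,
      intervalIntegral.integral_comp_add_right C h,
      ← step3 t le_rfl, ← step3 (t+h) (by linarith)]
  -- norm bound on the second difference of D
  have bD : ‖(D (t+h+h) - D (t+h)) - (D (t+h) - D t)‖ ≤ t^(z.re-3) * h * h * h := by
    rw [keyD]
    have := intervalIntegral.norm_integral_le_of_norm_le_const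
      (a := t) (b := t+h) (C := t^(z.re-3) * h * h) (f := fun x => C (x+h) - C x) ?_
    · calc ‖∫ x in t..t+h, (C (x+h) - C x)‖ ≤ t^(z.re-3)*h*h * |t+h-t| := this
        _ = t^(z.re-3)*h*h*h := by rw [show t+h-t = h by ring, abs_of_pos hh]
    · intro x hx
      rw [Set.uIoc_of_le (by linarith), Set.mem_Ioc] at hx
      simpa using bDC x hx.1.le
  -- the numerator equals z(z-1)(z-2) times the second difference of D
  have hE : (((t + 3*h : ℝ) : ℂ) ^ z - 3 * ((t + 2*h : ℝ) : ℂ) ^ z +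
        3 * ((t + h : ℝ) : ℂ) ^ z - ((t : ℝ) : ℂ) ^ z)
      = (z*(z-1)*(z-2)) * ((D (t+h+h) - D (t+h)) - (D (t+h) - D t)) := by
    simp only [hD]
    rw [show ((t+h+h)+h : ℝ) = t + 3*h by ring, show ((t+h)+h : ℝ) = t + 2*h by ring]
    field_simp [hz, hz1', hz2']
    ring
  -- final estimate
  have hz1a : ‖z‖ ≤ ‖z+1‖ := by
    rw [Complex.norm_def, Complex.norm_def]
    apply Real.sqrt_le_sqrt
    simp only [Complex.normSq_apply, Complex.add_re, Complex.add_im, Complex.one_re,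
      Complex.one_im]
    nlinarith [hz0]
  have hz2a : ‖z-1‖ ≤ ‖z+2‖ := by
    rw [Complex.norm_def, Complex.norm_def]
    apply Real.sqrt_le_sqrt
    simp only [Complex.normSq_apply, Complex.add_re, Complex.add_im, Complex.sub_re,
      Complex.sub_im, Complex.one_re, Complex.one_im]
    norm_num
    nlinarith [hz0]
  have hz3a : ‖z-2‖ ≤ ‖z+3‖ := by
    rw [Complex.norm_def, Complex.norm_def]
    apply Real.sqrt_le_sqrt
    simp only [Complex.normSq_apply, Complex.add_re, Complex.add_im, Complex.sub_re,
      Complex.sub_im, Complex.one_re, Complex.one_im]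
    norm_num
    nlinarith [hz0]
  have hp1 : (0:ℝ) < ‖z+1‖ := by
    apply norm_pos_iff.mpr
    intro e
    have := congrArg Complex.re e; simp at this; linarith
  have hp2 : (0:ℝ) < ‖z+2‖ := by
    apply norm_pos_iff.mpr
    intro e
    have := congrArg Complex.re e; simp at this; linarith
  have hp3 : (0:ℝ) < ‖z+3‖ := by
    apply norm_pos_iff.mpr
    intro e
    have := congrArg Complex.re e; simp at this; linarith
  have htr : (0:ℝ) < t^(z.re-3) := Real.rpow_pos_of_pos ht0 _
  -- norm of the numerator
  have bE : ‖(((t + 3*h : ℝ) : ℂ) ^ z - 3 * ((t + 2*h : ℝ) : ℂ) ^ z +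
        3 * ((t + h : ℝ) : ℂ) ^ z - ((t : ℝ) : ℂ) ^ z)‖
      ≤ ‖z+1‖ * ‖z+2‖ * ‖z+3‖ * (t^(z.re-3) * h * h * h) := by
    rw [hE, norm_mul]
    have h1 : ‖z*(z-1)*(z-2)‖ ≤ ‖z+1‖ * ‖z+2‖ * ‖z+3‖ := by
      rw [norm_mul, norm_mul]
      exact mul_le_mul (mul_le_mul hz1a hz2a (norm_nonneg _) (norm_nonneg _))
        hz3a (norm_nonneg _) (le_of_lt (mul_pos hp1 hp2))
    exact mul_le_mul h1 bD (norm_nonneg _) (le_of_lt (by positivity))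
  -- put everything together
  rw [norm_mul, norm_div]
  have hnh : ‖((h:ℂ))^3‖ = h^3 := by
    rw [norm_pow, Complex.norm_real, Real.norm_of_nonneg hh.le]
  have hden : ‖1 / ((z + 1) * (z + 2) * (z + 3))‖
      = 1 / (‖z+1‖ * ‖z+2‖ * ‖z+3‖) := by
    rw [norm_div, norm_one, norm_mul, norm_mul]
  rw [hnh, hden]
  have hh3 : (0:ℝ) < h^3 := by positivity
  have step : ‖(((t + 3*h : ℝ) : ℂ) ^ z - 3 * ((t + 2*h : ℝ) : ℂ) ^ z +
        3 * ((t + h : ℝ) : ℂ) ^ z - ((t : ℝ) : ℂ) ^ z)‖ / h^3 *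
      (1 / (‖z+1‖ * ‖z+2‖ * ‖z+3‖)) ≤ t^(z.re-3) := by
    rw [div_mul_div_comm, mul_one, div_le_iff₀ (by positivity)]
    calc ‖_‖ ≤ ‖z+1‖ * ‖z+2‖ * ‖z+3‖
          * (t^(z.re-3) * h * h * h) := bE
      _ = t^(z.re-3) * (h^3 * (‖z+1‖ * ‖z+2‖ * ‖z+3‖)) := by
          ring
  refine le_trans step ?_
  have e1 : t^(z.re-3) ≤ t^z.re := Real.rpow_le_rpow_of_exponent_le ht (by linarith)
  have e2 : t^z.re ≤ 4 * t^z.re := by nlinarith [Real.rpow_pos_of_pos ht0 z.re]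
  linarith
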